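/- Let d ≥ 1 and n ≥ 1 be integers and K > 0. Let c : ℝᵈ → ℝᵈ be n times continuously differentiable with all partial derivatives up to order n (including c itself) bounded in absolute value by K, and suppose that |det(𝕀 + θ·Dc(x))| ≥ K⁻¹ for all x ∈ ℝᵈ and θ ∈ [0,1]. Then for every θ ∈ [0,1] the map T_θ(x) := x + θ·c(x) is a bijection of ℝᵈ onto itself whose inverse map is n times continuously differentiable, i.e. T_θ is a Cⁿ-diffeomorphism of ℝᵈ. -/

import Mathlib

open MeasureTheory Finset
open scoped ENNReal

/-- Partial derivative in direction `i`. -/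
noncomputable def pd {d : ℕ} (i : Fin d) (f : EuclideanSpace ℝ (Fin d) → ℝ) :
    EuclideanSpace ℝ (Fin d) → ℝ :=
  fun x => fderiv ℝ f x (EuclideanSpace.single i 1)

/-- Multi-index partial derivative `∂^ζ`. -/
noncomputable def mpd {d : ℕ} (ζ : Fin d → ℕ) (f : EuclideanSpace ℝ (Fin d) → ℝ) :
    EuclideanSpace ℝ (Fin d) → ℝ :=
  (List.finRange d).foldr (fun i g => (pd i)^[ζ i] g) f

/-- Jacobian matrix of a map `ℝᵈ → ℝᵈ`. -/
noncomputable def jac {d : ℕ} (c : EuclideanSpace ℝ (Fin d) → EuclideanSpace ℝ (Fin d))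
    (x : EuclideanSpace ℝ (Fin d)) : Matrix (Fin d) (Fin d) ℝ :=
  Matrix.of fun i j => fderiv ℝ (fun y => c y i) x (EuclideanSpace.single j 1)

/-- The finite set of multi-indices `ζ ∈ ℕᵈ` with `|ζ| ≤ n`. -/
def midx (d n : ℕ) : Finset (Fin d → ℕ) :=
  (Finset.univ.image (fun f : Fin d → Fin (n + 1) => fun i => (f i : ℕ))).filter
    (fun ζ => ∑ i, ζ i ≤ n)

namespace DegAux

variable {d : ℕ}

local notation "E" => EuclideanSpace ℝ (Fin d)

lemma foldr_pd_single (j : Fin d) (f : E → ℝ)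
    (l : List (Fin d)) (hl : l.Nodup) :
    l.foldr (fun i g => (pd i)^[if i = j then 1 else 0] g) f =
      if j ∈ l then pd j f else f := by
  induction l with
  | nil => simp
  | cons a t ih =>
    rw [List.nodup_cons] at hl
    simp only [List.foldr_cons, ih hl.2]
    by_cases h : a = j
    · subst h
      simp [hl.1]
    · simp [h, List.mem_cons, Ne.symm h]

lemma mpd_single (j : Fin d) (f : E → ℝ) :
    mpd (fun i => if i = j then 1 else 0) f = pd j f := by
  rw [mpd, foldr_pd_single j f _ (List.nodup_finRange d)]
  simp [List.mem_finRange]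

/-- CLM attached to a matrix. -/
noncomputable def clm (A : Matrix (Fin d) (Fin d) ℝ) : E →L[ℝ] E :=
  Matrix.toEuclideanCLM (𝕜 := ℝ) A

lemma clm_apply (A : Matrix (Fin d) (Fin d) ℝ) (v : E) (i : Fin d) :
    clm A v i = A.mulVec v i := rfl

/-- The continuous linear equivalence attached to a nonsingular matrix. -/
noncomputable def matEquiv (A : Matrix (Fin d) (Fin d) ℝ) (hA : IsUnit A.det) :
    E ≃L[ℝ] E :=
  ContinuousLinearEquiv.equivOfInverse (clm A) (clm A⁻¹)
    (fun v => by
      rw [clm, clm, ← ContinuousLinearMap.comp_apply, ← ContinuousLinearMap.mul_def,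
        ← map_mul, Matrix.nonsing_inv_mul A hA, map_one, ContinuousLinearMap.one_apply])
    (fun v => by
      rw [clm, clm, ← ContinuousLinearMap.comp_apply, ← ContinuousLinearMap.mul_def,
        ← map_mul, Matrix.mul_nonsing_inv A hA, map_one, ContinuousLinearMap.one_apply])

lemma matEquiv_coe (A : Matrix (Fin d) (Fin d) ℝ) (hA : IsUnit A.det) :
    (matEquiv A hA : E →L[ℝ] E) = clm A := rfl

lemma matEquiv_symm_coe (A : Matrix (Fin d) (Fin d) ℝ) (hA : IsUnit A.det) :
    ((matEquiv A hA).symm : E →L[ℝ] E) = clm A⁻¹ := rfl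

lemma abs_apply_le_norm (v : E) (i : Fin d) : |v i| ≤ ‖v‖ := by
  rw [EuclideanSpace.norm_eq, ← Real.sqrt_sq_eq_abs]
  apply Real.sqrt_le_sqrt
  have : v i ^ 2 = ‖v i‖ ^ 2 := by rw [Real.norm_eq_abs, sq_abs]
  rw [this]
  exact Finset.single_le_sum (f := fun j => ‖v j‖ ^ 2) (fun j _ => sq_nonneg _)
    (Finset.mem_univ i)

lemma norm_le_sum_abs (v : E) : ‖v‖ ≤ ∑ i, |v i| := by
  rw [EuclideanSpace.norm_eq]
  calc Real.sqrt (∑ i, ‖v i‖ ^ 2) ≤ Real.sqrt ((∑ i, |v i|) ^ 2) := by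
        apply Real.sqrt_le_sqrt
        rw [sq, Finset.sum_mul]
        apply Finset.sum_le_sum
        intro i _
        rw [Real.norm_eq_abs, sq]
        apply mul_le_mul_of_nonneg_left _ (abs_nonneg _)
        exact Finset.single_le_sum (f := fun j => |v j|) (fun j _ => abs_nonneg _)
          (Finset.mem_univ i)
    _ = ∑ i, |v i| := Real.sqrt_sq (Finset.sum_nonneg fun i _ => abs_nonneg _)

lemma clm_norm_apply_le {A : Matrix (Fin d) (Fin d) ℝ} {B : ℝ} (hB : 0 ≤ B)
    (hA : ∀ i j, |A i j| ≤ B) (v : E) : ‖clm A v‖ ≤ (d * d) * B * ‖v‖ := by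
  calc ‖clm A v‖ ≤ ∑ i, |clm A v i| := norm_le_sum_abs _
    _ ≤ ∑ _i : Fin d, (d * B * ‖v‖) := by
        apply Finset.sum_le_sum
        intro i _
        rw [clm_apply, Matrix.mulVec, dotProduct]
        calc |∑ j, A i j * v j| ≤ ∑ j, |A i j * v j| := Finset.abs_sum_le_sum_abs _ _
          _ ≤ ∑ _j : Fin d, B * ‖v‖ := by
              apply Finset.sum_le_sum
              intro j _
              rw [abs_mul]
              exact mul_le_mul (hA i j) (abs_apply_le_norm v j) (abs_nonneg _) hB
          _ = d * B * ‖v‖ := by simp [mul_assoc]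
    _ = (d * d) * B * ‖v‖ := by simp; ring

lemma clm_opNorm_le {A : Matrix (Fin d) (Fin d) ℝ} {B : ℝ} (hB : 0 ≤ B)
    (hA : ∀ i j, |A i j| ≤ B) : ‖clm A‖ ≤ (d * d) * B :=
  ContinuousLinearMap.opNorm_le_bound _ (by positivity) (clm_norm_apply_le hB hA)

lemma jac_entry (c : E → E) (hc : Differentiable ℝ c) (x : E) (i j : Fin d) :
    jac c x i j = fderiv ℝ c x (EuclideanSpace.single j 1) i := by
  have h : HasFDerivAt (fun y => c y i)
      ((EuclideanSpace.proj i : E →L[ℝ] ℝ).comp (fderiv ℝ c x)) x := by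
    have h0 := (EuclideanSpace.proj (𝕜 := ℝ) i).hasFDerivAt.comp x (hc x).hasFDerivAt
    exact h0
  simp only [jac, Matrix.of_apply, h.fderiv]
  rfl

lemma fderiv_eq_clm_jac (c : E → E) (hc : Differentiable ℝ c) (x : E) :
    (fderiv ℝ c x : E →L[ℝ] E) = clm (jac c x) := by
  ext v i
  rw [clm_apply, Matrix.mulVec]
  have hv : v = ∑ j, v j • EuclideanSpace.single j 1 := by
    have := (EuclideanSpace.basisFun (Fin d) ℝ).sum_repr v
    simpa [EuclideanSpace.basisFun_apply, EuclideanSpace.basisFun_repr] using this.symm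
  conv_lhs => rw [hv]
  rw [map_sum]
  have hsum : (∑ j, fderiv ℝ c x (v j • EuclideanSpace.single j 1)) i
      = ∑ j, (fderiv ℝ c x (v j • EuclideanSpace.single j 1)) i :=
    by rw [WithLp.ofLp_sum]; exact Finset.sum_apply i Finset.univ _
  rw [hsum, dotProduct]
  congr 1
  ext j
  rw [_root_.map_smul]
  have hj : (fderiv ℝ c x) (EuclideanSpace.single j 1) i = jac c x i j :=
    (jac_entry c hc x i j).symm
  simp [hj]
  ring

lemma hasFDerivAt_T (c : E → E) (hc : Differentiable ℝ c) (θ : ℝ) (x : E) :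
    HasFDerivAt (fun y => y + θ • c y)
      (clm ((1 : Matrix (Fin d) (Fin d) ℝ) + θ • jac c x)) x := by
  have h := (hasFDerivAt_id x).add (((hc x).hasFDerivAt).const_smul θ)
  refine (h.congr_fderiv ?_ : _); symm
  rw [show clm ((1 : Matrix (Fin d) (Fin d) ℝ) + θ • jac c x) = Matrix.toEuclideanCLM (𝕜 := ℝ) ((1 : Matrix (Fin d) (Fin d) ℝ) + θ • jac c x) from rfl, map_add, _root_.map_smul, map_one]
  rw [show (Matrix.toEuclideanCLM (𝕜 := ℝ) (jac c x)) = clm (jac c x) from rfl]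
  rw [← fderiv_eq_clm_jac c hc x]
  rfl

lemma inv_entry_bound (A : Matrix (Fin d) (Fin d) ℝ) {K B : ℝ} (hK : 0 < K)
    (hdet : K⁻¹ ≤ |A.det|) (hB : 1 ≤ B) (hA : ∀ i j, |A i j| ≤ B) (i j : Fin d) :
    |A⁻¹ i j| ≤ K * (d.factorial * B ^ d) := by
  have hdet0 : |A.det|⁻¹ ≤ K := by
    rw [← inv_inv K]
    exact inv_anti₀ (by positivity) hdet
  rw [Matrix.inv_def, Matrix.smul_apply, Ring.inverse_eq_inv', smul_eq_mul, abs_mul, abs_inv]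
  have hadj : |A.adjugate i j| ≤ d.factorial * B ^ d := by
    rw [Matrix.adjugate_apply]
    have := Matrix.det_le (A := A.updateRow j (Pi.single i 1))
      (abv := (AbsoluteValue.abs : AbsoluteValue ℝ ℝ)) (x := B) ?_
    · simpa [nsmul_eq_mul] using this
    · intro i' j'
      rw [Matrix.updateRow_apply]
      by_cases h : i' = j
      · simp only [h, if_true]
        rcases eq_or_ne j' i with rfl | hji
        · simpa using hB
        · simp [Pi.single_apply, hji]
          linarith
      · simp only [h, if_false]
        exact hA i' j'
  calc |A.det|⁻¹ * |A.adjugate i j| ≤ K * (d.factorial * B ^ d) :=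
    mul_le_mul hdet0 hadj (abs_nonneg _) (le_of_lt hK)

end DegAux

open Finset in
/-- If `c : ℝᵈ → ℝᵈ` is `Cⁿ` with all partial derivatives up to order `n` (including `c`
itself) bounded by `K`, and `|det(𝕀 + θ·Dc(x))| ≥ K⁻¹` for all `x` and `θ ∈ [0,1]`, then for
every `θ ∈ [0,1]` the map `T_θ(x) = x + θ·c(x)` is a bijection of `ℝᵈ` with a `Cⁿ` inverse. -/
theorem degenerate_SIDE_stmt0 (d n : ℕ) (hd : 1 ≤ d) (hn : 1 ≤ n) (K : ℝ) (hK : 0 < K)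
    (c : EuclideanSpace ℝ (Fin d) → EuclideanSpace ℝ (Fin d))
    (hc : ContDiff ℝ (n : ℕ∞) c)
    (hbd : ∀ ζ : Fin d → ℕ, (∑ i, ζ i) ≤ n →
      ∀ (i : Fin d) (x : EuclideanSpace ℝ (Fin d)), |mpd ζ (fun y => c y i) x| ≤ K)
    (hdet : ∀ (x : EuclideanSpace ℝ (Fin d)), ∀ θ ∈ Set.Icc (0 : ℝ) 1,
      K⁻¹ ≤ |((1 : Matrix (Fin d) (Fin d) ℝ) + θ • jac c x).det|) :
    ∀ θ ∈ Set.Icc (0 : ℝ) 1,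
      ∃ J : EuclideanSpace ℝ (Fin d) → EuclideanSpace ℝ (Fin d),
        Function.LeftInverse J (fun x => x + θ • c x) ∧
        Function.RightInverse J (fun x => x + θ • c x) ∧
        ContDiff ℝ (n : ℕ∞) J := by
  classical
  have hn1 : (1 : WithTop ℕ∞) ≤ ((n : ℕ∞) : WithTop ℕ∞) := by exact_mod_cast hn
  have hn0 : ((n : ℕ∞) : WithTop ℕ∞) ≠ 0 := by exact_mod_cast (by omega : n ≠ 0)
  have hdiff : Differentiable ℝ c := hc.differentiable hn0
  -- entries of the Jacobian are bounded by K
  have hjac : ∀ (x : EuclideanSpace ℝ (Fin d)) (i j : Fin d), |jac c x i j| ≤ K := by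
    intro x i j
    have hζ : (∑ i', (fun i' => if i' = j then 1 else 0) i') ≤ n := by
      simpa [Finset.sum_ite_eq'] using hn
    have h := hbd (fun i' => if i' = j then 1 else 0) hζ i x
    rw [DegAux.mpd_single] at h
    exact h
  -- the matrices 1 + θ • Dc(x)
  have hAunit : ∀ θ ∈ Set.Icc (0 : ℝ) 1, ∀ x,
      IsUnit ((1 : Matrix (Fin d) (Fin d) ℝ) + θ • jac c x).det := by
    intro θ hθ x
    have h := hdet x θ hθ
    refine isUnit_iff_ne_zero.mpr fun h0 => ?_
    rw [h0, abs_zero] at h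
    exact absurd h (not_le.mpr (by positivity))
  have hAent : ∀ θ ∈ Set.Icc (0 : ℝ) 1, ∀ x i j,
      |((1 : Matrix (Fin d) (Fin d) ℝ) + θ • jac c x) i j| ≤ 1 + K := by
    intro θ hθ x i j
    rw [Matrix.add_apply, Matrix.smul_apply, smul_eq_mul]
    calc |(1 : Matrix (Fin d) (Fin d) ℝ) i j + θ * jac c x i j|
        ≤ |(1 : Matrix (Fin d) (Fin d) ℝ) i j| + |θ * jac c x i j| := abs_add_le _ _
      _ ≤ 1 + K := by
          apply add_le_add
          · rw [Matrix.one_apply]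
            by_cases h : i = j <;> simp [h]
          · rw [abs_mul]
            have hθ1 : |θ| ≤ 1 := abs_le.mpr ⟨by linarith [hθ.1], hθ.2⟩
            calc |θ| * |jac c x i j| ≤ 1 * K :=
              mul_le_mul hθ1 (hjac x i j) (abs_nonneg _) one_pos.le
              _ = K := one_mul K
  -- constants
  set Einv : ℝ := K * (d.factorial * (1 + K) ^ d) with hEinv_def
  set M₀ : ℝ := (d : ℝ) * d * Einv + 1 with hM₀_def
  set L : ℝ := (d : ℝ) * d * K + 1 with hL_def
  set δ : ℝ := (2 * M₀ * L)⁻¹ with hδ_def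
  have hEinvpos : 0 < Einv := by
    rw [hEinv_def]; positivity
  have hM₀pos : 0 < M₀ := by rw [hM₀_def]; positivity
  have hLpos : 0 < L := by rw [hL_def]; positivity
  have hδpos : 0 < δ := by rw [hδ_def]; positivity
  have hinv : ∀ θ ∈ Set.Icc (0 : ℝ) 1, ∀ x i j,
      |((1 : Matrix (Fin d) (Fin d) ℝ) + θ • jac c x)⁻¹ i j| ≤ Einv := fun θ hθ x i j =>
    DegAux.inv_entry_bound _ hK (hdet x θ hθ) (by linarith) (hAent θ hθ x) i j
  have hTd : ∀ (θ : ℝ) (x : EuclideanSpace ℝ (Fin d)),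
      HasFDerivAt (fun y => y + θ • c y)
        (DegAux.clm ((1 : Matrix (Fin d) (Fin d) ℝ) + θ • jac c x)) x := fun θ x =>
    DegAux.hasFDerivAt_T c hdiff θ x
  have hTcd : ∀ θ : ℝ, ContDiff ℝ (n : ℕ∞) (fun x => x + θ • c x) := fun θ =>
    contDiff_id.add (hc.const_smul θ)
  have hstrict : ∀ θ, ∀ hθ : θ ∈ Set.Icc (0 : ℝ) 1, ∀ x,
      HasStrictFDerivAt (fun y => y + θ • c y)
        ((DegAux.matEquiv _ (hAunit θ hθ x) :
          EuclideanSpace ℝ (Fin d) →L[ℝ] EuclideanSpace ℝ (Fin d))) x := by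
    intro θ hθ x
    exact ((hTcd θ).contDiffAt).hasStrictFDerivAt'
      (by rw [DegAux.matEquiv_coe]; exact hTd θ x) hn0
  have hsymmn : ∀ θ, ∀ hθ : θ ∈ Set.Icc (0 : ℝ) 1, ∀ x,
      ‖((DegAux.matEquiv _ (hAunit θ hθ x)).symm :
        EuclideanSpace ℝ (Fin d) →L[ℝ] EuclideanSpace ℝ (Fin d))‖ ≤ M₀ := by
    intro θ hθ x
    rw [DegAux.matEquiv_symm_coe]
    refine (DegAux.clm_opNorm_le hEinvpos.le (hinv θ hθ x)).trans ?_
    rw [hM₀_def]; linarith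
  have hclip : ∀ x y : EuclideanSpace ℝ (Fin d), ‖c y - c x‖ ≤ L * ‖y - x‖ := by
    intro x y
    refine convex_univ.norm_image_sub_le_of_norm_hasFDerivWithin_le
      (f' := fun z => fderiv ℝ c z)
      (fun z _ => (hdiff z).hasFDerivAt.hasFDerivWithinAt) (fun z _ => ?_)
      (Set.mem_univ x) (Set.mem_univ y)
    show ‖fderiv ℝ c z‖ ≤ L
    rw [DegAux.fderiv_eq_clm_jac c hdiff]
    refine (DegAux.clm_opNorm_le hK.le (hjac z)).trans ?_
    rw [hL_def]; linarith
  -- the continuation step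
  have step : ∀ θ₀, ∀ hθ₀ : θ₀ ∈ Set.Icc (0 : ℝ) 1,
      Function.Bijective (fun x => x + θ₀ • c x) →
      ∀ θ ∈ Set.Icc (0 : ℝ) 1, |θ - θ₀| ≤ δ →
      Function.Bijective (fun x => x + θ • c x) := by
    intro θ₀ hθ₀ hbij θ hθ hclose
    set g : EuclideanSpace ℝ (Fin d) → EuclideanSpace ℝ (Fin d) :=
      Function.invFun (fun x => x + θ₀ • c x) with hg_def
    have hgl : Function.LeftInverse g (fun x => x + θ₀ • c x) :=
      Function.leftInverse_invFun hbij.1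
    have hgr : Function.RightInverse g (fun x => x + θ₀ • c x) :=
      Function.rightInverse_invFun hbij.2
    have hgd : ∀ y, HasFDerivAt g
        (((DegAux.matEquiv _ (hAunit θ₀ hθ₀ (g y))).symm :
          EuclideanSpace ℝ (Fin d) →L[ℝ] EuclideanSpace ℝ (Fin d))) y := by
      intro y
      have hsd := hstrict θ₀ hθ₀ (g y)
      have hy : g y + θ₀ • c (g y) = y := hgr y
      have hev := hsd.eventually_right_inverse
      rw [hy] at hev
      have hgeq : g =ᶠ[nhds y] hsd.localInverse _ _ _ := hev.mono (fun z hz => by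
        conv_lhs => rw [← hz]
        exact hgl _)
      have hli := hsd.to_localInverse
      rw [hy] at hli
      exact hli.hasFDerivAt.congr_of_eventuallyEq hgeq
    have hglip : ∀ y y' : EuclideanSpace ℝ (Fin d), ‖g y' - g y‖ ≤ M₀ * ‖y' - y‖ := by
      intro y y'
      exact convex_univ.norm_image_sub_le_of_norm_hasFDerivWithin_le
        (fun z _ => (hgd z).hasFDerivWithinAt) (fun z _ => hsymmn θ₀ hθ₀ (g z))
        (Set.mem_univ y) (Set.mem_univ y')
    have hhalf : M₀ * L * δ = 2⁻¹ := by
      rw [hδ_def]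
      field_simp
    have hcontr : ∀ y, ContractingWith 2⁻¹
        (fun x => g (y - (θ - θ₀) • c x)) := by
      intro y
      constructor
      · rw [← NNReal.coe_lt_coe]; norm_num
      · apply LipschitzWith.of_dist_le_mul
        intro x x'
        rw [dist_eq_norm, dist_eq_norm]
        have h1 : (y - (θ - θ₀) • c x') - (y - (θ - θ₀) • c x)
            = (θ - θ₀) • (c x - c x') := by
          rw [smul_sub]; abel
        calc ‖g (y - (θ - θ₀) • c x) - g (y - (θ - θ₀) • c x')‖
            = ‖g (y - (θ - θ₀) • c x') - g (y - (θ - θ₀) • c x)‖ := norm_sub_rev _ _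
          _ ≤ M₀ * ‖(y - (θ - θ₀) • c x') - (y - (θ - θ₀) • c x)‖ := hglip _ _
          _ = M₀ * (|θ - θ₀| * ‖c x - c x'‖) := by
              rw [h1, norm_smul, Real.norm_eq_abs]
          _ ≤ M₀ * (δ * (L * ‖x - x'‖)) := by
              apply mul_le_mul_of_nonneg_left _ hM₀pos.le
              exact mul_le_mul hclose (hclip x' x) (norm_nonneg _) hδpos.le
          _ = (M₀ * L * δ) * ‖x - x'‖ := by ring
          _ = ((2⁻¹ : NNReal) : ℝ) * ‖x - x'‖ := by rw [hhalf]; norm_num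
    have hfix : ∀ y x, (g (y - (θ - θ₀) • c x) = x) ↔ (x + θ • c x = y) := by
      intro y x
      constructor
      · intro h
        have h3 : y - (θ - θ₀) • c x = x + θ₀ • c x := by
          have h2 := hgr (y - (θ - θ₀) • c x)
          rw [h] at h2
          exact h2.symm
        rw [sub_eq_iff_eq_add] at h3
        rw [h3, add_assoc, ← add_smul]
        have hθeq : θ₀ + (θ - θ₀) = θ := by ring
        rw [hθeq]
      · intro h
        have h4 : y - (θ - θ₀) • c x = x + θ₀ • c x := by
          rw [← h, sub_smul]
          abel
        rw [h4]
        exact hgl x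
    constructor
    · intro a b hab
      have ha : Function.IsFixedPt (fun x => g ((a + θ • c a) - (θ - θ₀) • c x)) a :=
        (hfix (a + θ • c a) a).mpr rfl
      have hb : Function.IsFixedPt (fun x => g ((a + θ • c a) - (θ - θ₀) • c x)) b := by
        refine (hfix (a + θ • c a) b).mpr ?_
        exact hab.symm
      exact (hcontr (a + θ • c a)).fixedPoint_unique' ha hb
    · intro y
      refine ⟨ContractingWith.fixedPoint _ (hcontr y), ?_⟩
      exact (hfix y _).mp ((hcontr y).fixedPoint_isFixedPt)
  -- induction on the number of steps
  have key : ∀ (m : ℕ) (θ : ℝ), θ ∈ Set.Icc (0 : ℝ) 1 → θ ≤ m * δ →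
      Function.Bijective (fun x => x + θ • c x) := by
    intro m
    induction m with
    | zero =>
      intro θ hθ hle
      have hθ0 : θ = 0 := le_antisymm (by simpa using hle) hθ.1
      subst hθ0
      have hid : (fun x : EuclideanSpace ℝ (Fin d) => x + (0 : ℝ) • c x) = id := by
        funext x; simp
      rw [hid]
      exact Function.bijective_id
    | succ m ih =>
      intro θ hθ hle
      set θ₀ : ℝ := max 0 (θ - δ) with hθ₀_def
      have hθ₀le : θ₀ ≤ θ := max_le hθ.1 (by linarith)
      have hθ₀mem : θ₀ ∈ Set.Icc (0 : ℝ) 1 := ⟨le_max_left _ _, hθ₀le.trans hθ.2⟩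
      have h1 : θ₀ ≤ m * δ := by
        apply max_le (by positivity)
        push_cast at hle
        linarith
      have h2 : |θ - θ₀| ≤ δ := by
        rw [abs_le]
        constructor
        · linarith [hδpos]
        · have := le_max_right 0 (θ - δ)
          rw [hθ₀_def]
          linarith
      exact step θ₀ hθ₀mem (ih θ₀ hθ₀mem h1) θ hθ h2
  have hbij_all : ∀ θ ∈ Set.Icc (0 : ℝ) 1,
      Function.Bijective (fun x => x + θ • c x) := by
    intro θ hθ
    obtain ⟨m, hm⟩ := exists_nat_ge (1 / δ)
    apply key m θ hθ
    have h1 : 1 ≤ m * δ := by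
      rw [← div_le_iff₀ hδpos] at *
      linarith
    linarith [hθ.2]
  -- conclusion
  intro θ hθ
  have hbij := hbij_all θ hθ
  refine ⟨Function.invFun (fun x => x + θ • c x),
    Function.leftInverse_invFun hbij.1, Function.rightInverse_invFun hbij.2, ?_⟩
  rw [contDiff_iff_contDiffAt]
  intro y
  set x : EuclideanSpace ℝ (Fin d) := Function.invFun (fun x => x + θ • c x) y with hx_def
  have hxy : x + θ • c x = y := Function.rightInverse_invFun hbij.2 y
  have hcd : ContDiffAt ℝ (n : ℕ∞) (fun x => x + θ • c x) x := (hTcd θ).contDiffAt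
  have hf' : HasFDerivAt (fun x => x + θ • c x)
      ((DegAux.matEquiv _ (hAunit θ hθ x) :
        EuclideanSpace ℝ (Fin d) →L[ℝ] EuclideanSpace ℝ (Fin d))) x := by
    rw [DegAux.matEquiv_coe]; exact hTd θ x
  have hsd := hcd.hasStrictFDerivAt' hf' hn0
  have hli : ContDiffAt ℝ (n : ℕ∞) (hsd.localInverse _ _ _) y := by
    have h2 := hcd.to_localInverse (f' := DegAux.matEquiv _ (hAunit θ hθ x)) hf' hn0
    rw [hxy] at h2
    exact h2
  have hev := hsd.eventually_right_inverse
  rw [hxy] at hev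
  have heq : (Function.invFun (fun x => x + θ • c x)) =ᶠ[nhds y]
      hsd.localInverse _ _ _ := hev.mono (fun z hz => by
    conv_lhs => rw [← hz]
    exact Function.leftInverse_invFun hbij.1 _)
  exact hli.congr_of_eventuallyEq heq
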